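/- arXiv:1209.3964 — 2 statements merged into one kernel-verified Lean document; each statement's English description precedes it below -/
import Mathlib

section
/- Iteration lemma: let n ∈ ℕ and let M_0, M_1, …, M_n, V_1, …, V_n, w_1, …, w_n be nonnegative integrable functions on a probability space such that E(M_{k-1}² + V_k²)^{1/2} + E w_k ≤ E M_k for all 1 ≤ k ≤ n. Then E(Σ_{k=1}^n V_k²)^{1/2} + E Σ_{k=1}^n w_k ≤ 2 (E M_n)^{1/2} (E max_{k ≤ n} M_k)^{1/2}. -/
open MeasureTheory Complex

noncomputable section

/-- `F = (F k)_{k ≤ n}` is a martingale on `(Ω, μ)` with respect to the filtration `ff`: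
each `F k` (for `k ≤ n`) is integrable, measurable with respect to `ff k`, and
`E[F k | ff (k-1)] = F (k-1)` for `1 ≤ k ≤ n`. -/
structure MartOn {Ω : Type*} [MeasurableSpace Ω] (μ : Measure Ω)
    (ff : ℕ → MeasurableSpace Ω) (n : ℕ) (F : ℕ → Ω → ℂ) : Prop where
  integrable : ∀ k, k ≤ n → Integrable (F k) μ
  adapted : ∀ k, k ≤ n → Measurable[ff k] (F k)
  mart : ∀ k, 1 ≤ k → k ≤ n → μ[F k | ff (k-1)] =ᵐ[μ] F (k-1)

/-- The `L¹` norm `E|F_n|` of the martingale `F = (F k)_{k ≤ n}`. -/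
def l1 {Ω : Type*} [MeasurableSpace Ω] (μ : Measure Ω) (n : ℕ) (F : ℕ → Ω → ℂ) : ℝ :=
  ∫ x, ‖F n x‖ ∂μ

/-- The `H¹` (square function) norm `E (∑_{k=1}^n |ΔF_k|²)^{1/2}`. -/
def h1 {Ω : Type*} [MeasurableSpace Ω] (μ : Measure Ω) (n : ℕ) (F : ℕ → Ω → ℂ) : ℝ :=
  ∫ x, Real.sqrt (∑ k ∈ Finset.Icc 1 n, ‖F k x - F (k-1) x‖ ^ 2) ∂μ

/-- The previsible norm `E (∑_{k=1}^n E_{k-1}|ΔF_k|²)^{1/2}`. -/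
def pnorm {Ω : Type*} [MeasurableSpace Ω] (μ : Measure Ω) (ff : ℕ → MeasurableSpace Ω)
    (n : ℕ) (F : ℕ → Ω → ℂ) : ℝ :=
  ∫ x, Real.sqrt (∑ k ∈ Finset.Icc 1 n,
    (μ[fun y => ‖F k y - F (k-1) y‖ ^ 2 | ff (k-1)]) x) ∂μ

/-- The absolutely summing norm `E ∑_{k=1}^n |ΔF_k|`. -/
def anorm {Ω : Type*} [MeasurableSpace Ω] (μ : Measure Ω) (n : ℕ) (F : ℕ → Ω → ℂ) : ℝ :=
  ∫ x, ∑ k ∈ Finset.Icc 1 n, ‖F k x - F (k-1) x‖ ∂μ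

/-- The previsible norm `E (∑_{k=1}^n E_{k-1}|d_k|²)^{1/2}` of a (real-valued)
martingale difference sequence `d = (d k)_{1 ≤ k ≤ n}`, used for martingale transforms. -/
def pnormR {Ω : Type*} [MeasurableSpace Ω] (μ : Measure Ω) (ff : ℕ → MeasurableSpace Ω)
    (n : ℕ) (d : ℕ → Ω → ℝ) : ℝ :=
  ∫ x, Real.sqrt (∑ k ∈ Finset.Icc 1 n, (μ[fun y => (d k y) ^ 2 | ff (k-1)]) x) ∂μ

/-- `conj v / |v|`, set to `1` at `v = 0`. -/
def unitDir (v : ℂ) : ℂ := if v = 0 then 1 else (starRingEnd ℂ) v / ((‖v‖ : ℝ) : ℂ)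

-- L1
lemma myL1 {l c s : ℝ} (hl : 1 ≤ l) (hc : 0 ≤ c) (hs : 0 ≤ s) :
    s ≤ l * (Real.sqrt (c ^ 2 + s ^ 2) - c) + c / l := by
  have hl0 : (0:ℝ) < l := lt_of_lt_of_le one_pos hl
  set q := Real.sqrt (c ^ 2 + s ^ 2) with hq
  have hq2 : q ^ 2 = c ^ 2 + s ^ 2 := Real.sq_sqrt (by positivity)
  have hqc : c ≤ q := by
    have h := Real.sqrt_le_sqrt (show c ^ 2 ≤ c ^ 2 + s ^ 2 by nlinarith)
    rwa [Real.sqrt_sq hc] at h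
  have hqs : s ≤ q := by
    have h := Real.sqrt_le_sqrt (show s ^ 2 ≤ c ^ 2 + s ^ 2 by nlinarith)
    rwa [Real.sqrt_sq hs] at h
  have hqcs : q ≤ c + s := by
    have h := Real.sqrt_le_sqrt (show c ^ 2 + s ^ 2 ≤ (c + s) ^ 2 by nlinarith)
    rwa [Real.sqrt_sq (by positivity)] at h
  have key : s - l * (q - c) ≤ c / l := by
    rw [le_div_iff₀ hl0]
    have h2l : (0:ℝ) ≤ l ^ 2 - 1 := by nlinarith
    have hA : (0:ℝ) ≤ l ^ 2 * q := by positivity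
    have hB : (0:ℝ) ≤ l * s + (l ^ 2 - 1) * c := by positivity
    have hid : (l ^ 2 * q) ^ 2 - (l * s + (l ^ 2 - 1) * c) ^ 2
        = (l ^ 2 - 1) * (l * s - c) ^ 2 + l ^ 2 * c ^ 2 := by
      linear_combination (l ^ 4) * hq2
    have hkey : (l * s + (l ^ 2 - 1) * c) ^ 2 ≤ (l ^ 2 * q) ^ 2 := by
      nlinarith [hid, mul_nonneg h2l (sq_nonneg (l * s - c)), sq_nonneg (l * c)]
    nlinarith [hkey, hA, hB]
  linarith

-- two-term subadditivity
lemma myL2two {c x y : ℝ} (hc : 0 ≤ c) (hx : 0 ≤ x) (hy : 0 ≤ y) :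
    Real.sqrt (c ^ 2 + (x + y)) ≤ Real.sqrt (c ^ 2 + x) + Real.sqrt (c ^ 2 + y) - c := by
  set p := Real.sqrt (c ^ 2 + x) with hp
  set q := Real.sqrt (c ^ 2 + y) with hqd
  have hp2 : p ^ 2 = c ^ 2 + x := Real.sq_sqrt (by positivity)
  have hq2 : q ^ 2 = c ^ 2 + y := Real.sq_sqrt (by positivity)
  have hpc : c ≤ p := by
    have h := Real.sqrt_le_sqrt (show c ^ 2 ≤ c ^ 2 + x by linarith)
    rwa [Real.sqrt_sq hc] at h
  have hqc : c ≤ q := by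
    have h := Real.sqrt_le_sqrt (show c ^ 2 ≤ c ^ 2 + y by linarith)
    rwa [Real.sqrt_sq hc] at h
  have h1 : c ^ 2 + (x + y) ≤ (p + q - c) ^ 2 := by
    nlinarith [mul_nonneg (sub_nonneg.2 hpc) (sub_nonneg.2 hqc)]
  calc Real.sqrt (c ^ 2 + (x + y)) ≤ Real.sqrt ((p + q - c) ^ 2) := Real.sqrt_le_sqrt h1
    _ = p + q - c := Real.sqrt_sq (by linarith)

lemma myL2 {ι : Type*} (s : Finset ι) (v : ι → ℝ) (hv : ∀ i ∈ s, 0 ≤ v i) {c : ℝ} (hc : 0 ≤ c) :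
    Real.sqrt (c ^ 2 + ∑ i ∈ s, v i) ≤ (∑ i ∈ s, (Real.sqrt (c ^ 2 + v i) - c)) + c := by
  classical
  induction s using Finset.induction with
  | empty => simp [Real.sqrt_sq hc]
  | @insert a t ha ih =>
    rw [Finset.sum_insert ha, Finset.sum_insert ha]
    have h1 := myL2two hc (hv a (Finset.mem_insert_self a t)) (Finset.sum_nonneg fun i hi => hv i (Finset.mem_insert_of_mem hi))
    have h2 := ih fun i hi => hv i (Finset.mem_insert_of_mem hi)
    linarith

lemma myL3 {b c v : ℝ} (hb : 0 ≤ b) (hbc : b ≤ c) (hv : 0 ≤ v) :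
    Real.sqrt (c ^ 2 + v) - c ≤ Real.sqrt (b ^ 2 + v) - b := by
  set p := Real.sqrt (b ^ 2 + v) with hp
  have hp2 : p ^ 2 = b ^ 2 + v := Real.sq_sqrt (by positivity)
  have hpb : b ≤ p := by
    have h := Real.sqrt_le_sqrt (show b ^ 2 ≤ b ^ 2 + v by linarith)
    rwa [Real.sqrt_sq hb] at h
  have h1 : c ^ 2 + v ≤ (p + (c - b)) ^ 2 := by
    nlinarith [mul_nonneg (sub_nonneg.2 hpb) (sub_nonneg.2 hbc)]
  have h2 : Real.sqrt (c ^ 2 + v) ≤ p + (c - b) := by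
    calc Real.sqrt (c ^ 2 + v) ≤ Real.sqrt ((p + (c - b)) ^ 2) := Real.sqrt_le_sqrt h1
      _ = p + (c - b) := Real.sqrt_sq (by linarith)
  linarith

lemma myPt {ι : Type*} (s : Finset ι) (b v : ι → ℝ) {c l : ℝ} (hl : 1 ≤ l) (hc : 0 ≤ c)
    (hb0 : ∀ i ∈ s, 0 ≤ b i) (hbc : ∀ i ∈ s, b i ≤ c) (hv : ∀ i ∈ s, 0 ≤ v i) :
    Real.sqrt (∑ i ∈ s, v i ^ 2) ≤
      l * (∑ i ∈ s, (Real.sqrt (b i ^ 2 + v i ^ 2) - b i)) + c / l := by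
  have hS0 : 0 ≤ Real.sqrt (∑ i ∈ s, v i ^ 2) := Real.sqrt_nonneg _
  have hsum : 0 ≤ ∑ i ∈ s, v i ^ 2 := Finset.sum_nonneg fun i _ => sq_nonneg _
  have hS2 : Real.sqrt (∑ i ∈ s, v i ^ 2) ^ 2 = ∑ i ∈ s, v i ^ 2 := Real.sq_sqrt hsum
  have h1 := myL1 hl hc hS0
  rw [hS2] at h1
  have h2 := myL2 s (fun i => v i ^ 2) (fun i _ => sq_nonneg _) hc
  have h3 : (∑ i ∈ s, (Real.sqrt (c ^ 2 + v i ^ 2) - c)) ≤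
      ∑ i ∈ s, (Real.sqrt (b i ^ 2 + v i ^ 2) - b i) :=
    Finset.sum_le_sum fun i hi => by
      have := myL3 (hb0 i hi) (hbc i hi) (sq_nonneg (v i)); linarith
  have h4 : Real.sqrt (c ^ 2 + ∑ i ∈ s, v i ^ 2) - c ≤
      ∑ i ∈ s, (Real.sqrt (b i ^ 2 + v i ^ 2) - b i) := by linarith
  have h5 := mul_le_mul_of_nonneg_left h4 (by linarith : (0:ℝ) ≤ l)
  linarith

lemma myTel (f : ℕ → ℝ) (n : ℕ) : ∑ k ∈ Finset.Icc 1 n, (f k - f (k - 1)) = f n - f 0 := by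
  induction n with
  | zero => simp
  | succ m ih =>
    rw [Finset.sum_Icc_succ_top (by omega), ih]
    simp


lemma myAEMeasSup' {Ω : Type*} [MeasurableSpace Ω] {μ : Measure Ω} {n : ℕ} {f : ℕ → Ω → ℝ}
    (hf : ∀ k, k ≤ n → AEMeasurable (f k) μ) :
    AEMeasurable (fun x => (Finset.range (n+1)).sup' Finset.nonempty_range_add_one
      (fun k => f k x)) μ := by
  induction n with
  | zero => simpa using hf 0 le_rfl
  | succ m ih =>
    have h1 : (fun x => (Finset.range (m+1+1)).sup' Finset.nonempty_range_add_one fun k => f k x)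
        = fun x => ((Finset.range (m+1)).sup' Finset.nonempty_range_add_one fun k => f k x)
            ⊔ f (m+1) x := by
      funext x
      apply le_antisymm
      · refine Finset.sup'_le _ _ fun k hk => ?_
        rcases Nat.lt_succ_iff_lt_or_eq.1 (Finset.mem_range.1 hk) with h | h
        · exact le_sup_of_le_left (Finset.le_sup' (fun k => f k x) (Finset.mem_range.2 h))
        · subst h; exact le_sup_right
      · apply sup_le
        · refine Finset.sup'_le _ _ fun k hk => ?_
          have hk' : k < m + 1 + 1 := by
            have := Finset.mem_range.1 hk; omega
          exact Finset.le_sup' (fun k => f k x) (Finset.mem_range.2 hk')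
        · exact Finset.le_sup' (fun k => f k x) (Finset.mem_range.2 (by omega))
    rw [h1]
    exact (ih fun k hk => hf k (hk.trans (Nat.le_succ m))).sup (hf (m+1) le_rfl)



/-- **Iteration lemma.** If nonnegative integrable `M_0, …, M_n`, `V_1, …, V_n`,
`w_1, …, w_n` satisfy `E (M_{k-1}² + V_k²)^{1/2} + E w_k ≤ E M_k` for `1 ≤ k ≤ n`, then
`E (∑ V_k²)^{1/2} + E ∑ w_k ≤ 2 (E M_n)^{1/2} (E max_{k ≤ n} M_k)^{1/2}`. -/
theorem iteration_lemma (Ω : Type) [MeasurableSpace Ω] (μ : Measure Ω)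
    [IsProbabilityMeasure μ] (n : ℕ) (M V w : ℕ → Ω → ℝ)
    (hM : ∀ k, k ≤ n → Integrable (M k) μ ∧ ∀ x, 0 ≤ M k x)
    (hV : ∀ k, 1 ≤ k → k ≤ n → Integrable (V k) μ ∧ ∀ x, 0 ≤ V k x)
    (hw : ∀ k, 1 ≤ k → k ≤ n → Integrable (w k) μ ∧ ∀ x, 0 ≤ w k x)
    (hyp : ∀ k, 1 ≤ k → k ≤ n →
      (∫ x, Real.sqrt ((M (k-1) x) ^ 2 + (V k x) ^ 2) ∂μ) + (∫ x, w k x ∂μ)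
        ≤ ∫ x, M k x ∂μ) :
    (∫ x, Real.sqrt (∑ k ∈ Finset.Icc 1 n, (V k x) ^ 2) ∂μ)
      + (∫ x, ∑ k ∈ Finset.Icc 1 n, w k x ∂μ)
    ≤ 2 * Real.sqrt (∫ x, M n x ∂μ)
        * Real.sqrt (∫ x,
            (Finset.range (n+1)).sup' Finset.nonempty_range_add_one (fun k => M k x) ∂μ) := by
  classical
  have hMint : ∀ k, k ≤ n → Integrable (M k) μ := fun k hk => (hM k hk).1
  have hMnn : ∀ k, k ≤ n → ∀ x, 0 ≤ M k x := fun k hk => (hM k hk).2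
  set Ms : Ω → ℝ := fun x =>
    (Finset.range (n+1)).sup' Finset.nonempty_range_add_one (fun k => M k x) with hMsdef
  set S : Ω → ℝ := fun x => Real.sqrt (∑ k ∈ Finset.Icc 1 n, (V k x) ^ 2) with hSdef
  have hmem : ∀ k ∈ Finset.Icc 1 n, 1 ≤ k ∧ k ≤ n := fun k hk => Finset.mem_Icc.1 hk
  have hmem' : ∀ k ∈ Finset.Icc 1 n, k - 1 ≤ n :=
    fun k hk => le_trans (Nat.sub_le k 1) (hmem k hk).2
  have hMsub : ∀ (x : Ω) (k : ℕ), k ≤ n → M k x ≤ Ms x := fun x k hk =>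
    Finset.le_sup' (fun k => M k x) (Finset.mem_range.2 (Nat.lt_succ_of_le hk))
  have hMsnn : ∀ x, 0 ≤ Ms x := fun x => le_trans (hMnn n le_rfl x) (hMsub x n le_rfl)
  have hMsaem : AEMeasurable Ms μ := myAEMeasSup' (fun k hk => (hMint k hk).aemeasurable)
  have hMsint : Integrable Ms μ := by
    refine Integrable.mono' (integrable_finset_sum (Finset.range (n+1))
      (fun k hk => hMint k (Nat.lt_succ_iff.1 (Finset.mem_range.1 hk))))
      hMsaem.aestronglyMeasurable ?_
    filter_upwards with x
    rw [Real.norm_eq_abs, _root_.abs_of_nonneg (hMsnn x)]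
    exact Finset.sup'_le _ _ fun k hk => Finset.single_le_sum
      (fun i hi => hMnn i (Nat.lt_succ_iff.1 (Finset.mem_range.1 hi)) x) hk
  have hgaem : ∀ k ∈ Finset.Icc 1 n,
      AEMeasurable (fun x => Real.sqrt (M (k-1) x ^ 2 + V k x ^ 2)) μ := by
    intro k hk
    have h1 := (hMint (k-1) (hmem' k hk)).aemeasurable
    have h2 := (hV k (hmem k hk).1 (hmem k hk).2).1.aemeasurable
    exact Real.continuous_sqrt.measurable.comp_aemeasurable ((h1.pow_const 2).add (h2.pow_const 2))
  have hgint : ∀ k ∈ Finset.Icc 1 n,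
      Integrable (fun x => Real.sqrt (M (k-1) x ^ 2 + V k x ^ 2)) μ := by
    intro k hk
    refine Integrable.mono' ((hMint _ (hmem' k hk)).add (hV k (hmem k hk).1 (hmem k hk).2).1)
      (hgaem k hk).aestronglyMeasurable ?_
    filter_upwards with x
    rw [Real.norm_eq_abs, _root_.abs_of_nonneg (Real.sqrt_nonneg _)]
    have h1 := hMnn _ (hmem' k hk) x
    have h2 := (hV k (hmem k hk).1 (hmem k hk).2).2 x
    calc Real.sqrt (M (k-1) x ^ 2 + V k x ^ 2)
        ≤ Real.sqrt ((M (k-1) x + V k x) ^ 2) := Real.sqrt_le_sqrt (by nlinarith)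
      _ = M (k-1) x + V k x := Real.sqrt_sq (by linarith)
  have hSaem : AEMeasurable S μ := by
    refine Real.continuous_sqrt.measurable.comp_aemeasurable (Finset.aemeasurable_fun_sum _ (fun k hk => ?_))
    exact ((hV k (hmem k hk).1 (hmem k hk).2).1.aemeasurable).pow_const 2
  have hVnn : ∀ k ∈ Finset.Icc 1 n, ∀ x, 0 ≤ V k x :=
    fun k hk => (hV k (hmem k hk).1 (hmem k hk).2).2
  have hSint : Integrable S μ := by
    refine Integrable.mono' (integrable_finset_sum _
      (fun k hk => (hV k (hmem k hk).1 (hmem k hk).2).1)) hSaem.aestronglyMeasurable ?_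
    filter_upwards with x
    rw [Real.norm_eq_abs, _root_.abs_of_nonneg (Real.sqrt_nonneg _)]
    have h1 : ∑ k ∈ Finset.Icc 1 n, (V k x) ^ 2 ≤ (∑ k ∈ Finset.Icc 1 n, V k x) ^ 2 :=
      Finset.sum_sq_le_sq_sum_of_nonneg (fun k hk => hVnn k hk x)
    calc S x ≤ Real.sqrt ((∑ k ∈ Finset.Icc 1 n, V k x) ^ 2) := Real.sqrt_le_sqrt h1
      _ = _ := Real.sqrt_sq (Finset.sum_nonneg fun k hk => hVnn k hk x)
  set A := ∫ x, M n x ∂μ with hA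
  set B := ∫ x, Ms x ∂μ with hB
  have hW : ∫ x, ∑ k ∈ Finset.Icc 1 n, w k x ∂μ = ∑ k ∈ Finset.Icc 1 n, ∫ x, w k x ∂μ :=
    integral_finset_sum _ (fun k hk => (hw k (hmem k hk).1 (hmem k hk).2).1)
  set W := ∑ k ∈ Finset.Icc 1 n, ∫ x, w k x ∂μ with hWd
  have hWnn : 0 ≤ W :=
    Finset.sum_nonneg fun k hk => integral_nonneg ((hw k (hmem k hk).1 (hmem k hk).2).2)
  have hA0 : 0 ≤ A := integral_nonneg (hMnn n le_rfl)
  have hAB : A ≤ B := integral_mono (hMint n le_rfl) hMsint (fun x => hMsub x n le_rfl)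
  have hB0 : 0 ≤ B := le_trans hA0 hAB
  have key : ∀ l : ℝ, 1 ≤ l → (∫ x, S x ∂μ) + W ≤ l * A + B / l := by
    intro l hl
    have hl0 : (0:ℝ) < l := lt_of_lt_of_le one_pos hl
    have hpt : ∀ x, S x ≤ l * (∑ k ∈ Finset.Icc 1 n,
        (Real.sqrt (M (k-1) x ^ 2 + V k x ^ 2) - M (k-1) x)) + Ms x / l := by
      intro x
      exact myPt (Finset.Icc 1 n) (fun k => M (k-1) x) (fun k => V k x) hl (hMsnn x)
        (fun k hk => hMnn (k-1) (hmem' k hk) x)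
        (fun k hk => hMsub x (k-1) (hmem' k hk))
        (fun k hk => hVnn k hk x)
    have hdint : ∀ k ∈ Finset.Icc 1 n, Integrable
        (fun x => Real.sqrt (M (k-1) x ^ 2 + V k x ^ 2) - M (k-1) x) μ :=
      fun k hk => (hgint k hk).sub (hMint (k-1) (hmem' k hk))
    have hsumint : Integrable (fun x => ∑ k ∈ Finset.Icc 1 n,
        (Real.sqrt (M (k-1) x ^ 2 + V k x ^ 2) - M (k-1) x)) μ :=
      integrable_finset_sum _ hdint
    have h1 : ∫ x, S x ∂μ ≤ ∫ x, (l * (∑ k ∈ Finset.Icc 1 n,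
        (Real.sqrt (M (k-1) x ^ 2 + V k x ^ 2) - M (k-1) x)) + Ms x / l) ∂μ :=
      integral_mono hSint ((hsumint.const_mul l).add (hMsint.div_const l)) hpt
    rw [integral_add (hsumint.const_mul l) (hMsint.div_const l), integral_const_mul,
      integral_div, integral_finset_sum _ hdint] at h1
    rw [← hB] at h1
    have h2 : ∀ k ∈ Finset.Icc 1 n,
        ∫ x, (Real.sqrt (M (k-1) x ^ 2 + V k x ^ 2) - M (k-1) x) ∂μ
          ≤ (∫ x, M k x ∂μ) - (∫ x, w k x ∂μ) - ∫ x, M (k-1) x ∂μ := by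
      intro k hk
      rw [integral_sub (hgint k hk) (hMint (k-1) (hmem' k hk))]
      have := hyp k (hmem k hk).1 (hmem k hk).2
      linarith
    have h3 : ∑ k ∈ Finset.Icc 1 n,
        ∫ x, (Real.sqrt (M (k-1) x ^ 2 + V k x ^ 2) - M (k-1) x) ∂μ
          ≤ (∫ x, M n x ∂μ) - (∫ x, M 0 x ∂μ) - W := by
      have h4 := Finset.sum_le_sum h2
      have h5 : ∑ k ∈ Finset.Icc 1 n,
          ((∫ x, M k x ∂μ) - (∫ x, w k x ∂μ) - ∫ x, M (k-1) x ∂μ)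
          = (∑ k ∈ Finset.Icc 1 n, ((∫ x, M k x ∂μ) - ∫ x, M (k-1) x ∂μ)) - W := by
        rw [hWd, ← Finset.sum_sub_distrib]
        exact Finset.sum_congr rfl fun k hk => by ring
      rw [h5, myTel (fun k => ∫ x, M k x ∂μ) n] at h4
      exact h4
    have hM00 : 0 ≤ ∫ x, M 0 x ∂μ := integral_nonneg (hMnn 0 (Nat.zero_le n))
    have hlW : W ≤ l * W := le_mul_of_one_le_left hWnn hl
    have hlsum := mul_le_mul_of_nonneg_left h3 hl0.le
    have hexp : l * ((∫ x, M n x ∂μ) - (∫ x, M 0 x ∂μ) - W)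
        = l * (∫ x, M n x ∂μ) - l * (∫ x, M 0 x ∂μ) - l * W := by ring
    rw [hexp] at hlsum
    have hlM0 : 0 ≤ l * ∫ x, M 0 x ∂μ := mul_nonneg hl0.le hM00
    rw [hA]
    linarith [h1, hlsum, hlW, hlM0]
  rcases hA0.eq_or_lt with hAz | hApos
  · have hsA : Real.sqrt A = 0 := by rw [← hAz, Real.sqrt_zero]
    rw [hW, hsA, mul_zero, zero_mul]
    refine le_of_forall_pos_le_add fun ε hε => ?_
    have hl1 : (1:ℝ) ≤ max 1 (B / ε) := le_max_left _ _
    have hl0 : (0:ℝ) < max 1 (B / ε) := lt_of_lt_of_le one_pos hl1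
    have h := key _ hl1
    rw [← hAz, mul_zero, zero_add] at h
    have hBl : B / max 1 (B / ε) ≤ ε := by
      rw [div_le_iff₀ hl0, mul_comm]
      calc B = (B / ε) * ε := by field_simp
        _ ≤ max 1 (B / ε) * ε :=
            mul_le_mul_of_nonneg_right (le_max_right _ _) hε.le
    linarith
  · have hsA : 0 < Real.sqrt A := Real.sqrt_pos.2 hApos
    have hsB : 0 < Real.sqrt B := Real.sqrt_pos.2 (lt_of_lt_of_le hApos hAB)
    have hA2 : Real.sqrt A * Real.sqrt A = A := Real.mul_self_sqrt hA0
    have hB2 : Real.sqrt B * Real.sqrt B = B := Real.mul_self_sqrt hB0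
    have hl1 : (1:ℝ) ≤ Real.sqrt B / Real.sqrt A :=
      (one_le_div hsA).2 (Real.sqrt_le_sqrt hAB)
    have h := key _ hl1
    have e1 : (Real.sqrt B / Real.sqrt A) * A = Real.sqrt A * Real.sqrt B := by
      rw [div_mul_eq_mul_div, div_eq_iff hsA.ne']; linear_combination (-Real.sqrt B) * hA2
    have e2 : B / (Real.sqrt B / Real.sqrt A) = Real.sqrt A * Real.sqrt B := by
      rw [div_div_eq_mul_div, div_eq_iff hsB.ne']; linear_combination (-Real.sqrt A) * hB2
    rw [hW]
    rw [e1, e2] at h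
    linarith
end
end

section
/- Arithmetic lemma: let μ, b ∈ ℂ with (μ, b) ≠ (0, 0), and set a = |μ| + |μ − b|²/(|μ| + |b|). Then for every w ∈ ℂ with |w| = 1: (a − |b|)² ≤ 4(Im²(w·(μ − b)) + Re²(w·μ)), and |μ − b|² ≤ 2(a² − |μ|²). -/
lemma auxB (m B d : ℝ) (hm : 0 ≤ m) (hB : 0 ≤ B) (hd : 0 ≤ d)
    (tr1 : d ≤ m+B) (tr2 : B ≤ m+d) (tr3 : m ≤ B+d) :
    (m^2+d^2-B^2)^2 ≤ 2*(m^2+d^2)*(m+B)^2 := by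
  nlinarith [mul_nonneg hm hB, mul_nonneg hm hd, mul_nonneg hB hd,
    mul_nonneg (mul_nonneg hm hB) hd, sq_nonneg (m+d-B), sq_nonneg (m-d),
    mul_nonneg (sub_nonneg.2 tr1) (sub_nonneg.2 tr2),
    mul_nonneg (sub_nonneg.2 tr2) (sub_nonneg.2 tr3),
    mul_nonneg (sub_nonneg.2 tr1) (sub_nonneg.2 tr3),
    sq_nonneg (m^2+d^2-B^2)]

lemma root_bound (T c2 s2 X : ℝ) (hs2 : 0 < s2) (hc2 : 0 ≤ c2)
    (hC1 : c2 ≤ X*(T-X)) (hA : 0 ≤ s2^2 + c2 - T*s2) (hBf : 2*c2 ≤ T*s2) :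
    c2 ≤ X * s2 := by
  by_contra hcon
  push_neg at hcon
  obtain ⟨X0, hX0⟩ : ∃ X0, X0 * s2 = c2 := ⟨c2/s2, div_mul_cancel₀ _ hs2.ne'⟩
  subst hX0
  have hX0nn : 0 ≤ X0 := nonneg_of_mul_nonneg_right (by linarith : (0:ℝ) ≤ s2 * X0) hs2
  have hlt : X < X0 := lt_of_mul_lt_mul_right hcon hs2.le
  have h2X0 : 2*X0 ≤ T := by
    have h7 : (2*X0)*s2 ≤ T*s2 := by linarith
    exact le_of_mul_le_mul_right h7 hs2
  have hTle : T ≤ s2 + X0 := by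
    have h8 : 0 ≤ s2 * (s2 + X0 - T) := by linarith [hA]
    nlinarith [h8]
  have hAx : X0*(T-X0) ≤ X0*s2 := by nlinarith [mul_nonneg hX0nn (sub_nonneg.2 hTle)]
  nlinarith [mul_pos (sub_pos.2 hlt) (show (0:ℝ) < T - X - X0 by linarith)]

lemma key_ineq (m B d p q r t : ℝ) (hm : 0 ≤ m) (hB : 0 ≤ B) (hd : 0 ≤ d)
    (h1 : p^2+q^2 = m^2) (h2 : r^2+t^2 = d^2) (h3 : (p-r)^2+(q-t)^2 = B^2)
    (tr1 : d ≤ m+B) (tr2 : B ≤ m+d) (tr3 : m ≤ B+d) (hs : 0 < m+B) :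
    (m^2+d^2-B^2)^2 ≤ 4*((t^2+p^2)*(m+B)^2) := by
  have hs2 : (0:ℝ) < (m+B)^2 := by positivity
  have hc' : p*r + q*t = (m^2+d^2-B^2)/2 := by linear_combination (h1 + h2 - h3)/2
  have hC1 : ((m^2+d^2-B^2)/2)^2 ≤ (t^2+p^2)*((m^2+d^2) - (t^2+p^2)) := by
    have hq : q^2+r^2 = (m^2+d^2) - (t^2+p^2) := by linarith
    calc ((m^2+d^2-B^2)/2)^2 = (p*r+q*t)^2 := by rw [hc']
    _ ≤ (p^2+t^2)*(q^2+r^2) := by nlinarith [sq_nonneg (p*q - r*t)]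
    _ = (t^2+p^2)*((m^2+d^2) - (t^2+p^2)) := by rw [hq]; ring
  have hA : 0 ≤ ((m+B)^2)^2 + ((m^2+d^2-B^2)/2)^2 - (m^2+d^2)*(m+B)^2 := by
    have hDD : (0:ℝ) ≤ (m+B)^2 - d^2 := by nlinarith
    have h5 : (0:ℝ) ≤ 4*(m+B)*B + ((m+B)^2 - d^2) := by
      have := mul_nonneg (mul_nonneg (by norm_num : (0:ℝ) ≤ 4) (by linarith : (0:ℝ) ≤ m+B)) hB
      linarith
    have h4 : ((m+B)^2)^2 + ((m^2+d^2-B^2)/2)^2 - (m^2+d^2)*(m+B)^2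
        = (((m+B)^2 - d^2) * (4*(m+B)*B + ((m+B)^2 - d^2)))/4 := by ring
    rw [h4]
    exact div_nonneg (mul_nonneg hDD h5) (by norm_num)
  have hBf : 2*((m^2+d^2-B^2)/2)^2 ≤ (m^2+d^2)*(m+B)^2 := by
    linarith [auxB m B d hm hB hd tr1 tr2 tr3]
  have key := root_bound (m^2+d^2) (((m^2+d^2-B^2)/2)^2) ((m+B)^2) (t^2+p^2)
    hs2 (by positivity) hC1 hA hBf
  linarith [key]

lemma part1 (m B d p q r t : ℝ) (hm : 0 ≤ m) (hB : 0 ≤ B) (hd : 0 ≤ d)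
    (h1 : p^2+q^2 = m^2) (h2 : r^2+t^2 = d^2) (h3 : (p-r)^2+(q-t)^2 = B^2)
    (tr1 : d ≤ m+B) (tr2 : B ≤ m+d) (tr3 : m ≤ B+d) (hs : 0 < m+B) :
    (m + d^2/(m+B) - B)^2 ≤ 4*(t^2 + p^2) := by
  have hkey := key_ineq m B d p q r t hm hB hd h1 h2 h3 tr1 tr2 tr3 hs
  have hsne : (m+B) ≠ 0 := hs.ne'
  have expand1 : (m + d^2/(m+B) - B)^2 = (m^2+d^2-B^2)^2/(m+B)^2 := by
    field_simp
    ring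
  rw [expand1, div_le_iff₀ (by positivity)]
  nlinarith [hkey]

lemma part2 (m B d : ℝ) (hm : 0 ≤ m) (hB : 0 ≤ B) (hd : 0 ≤ d)
    (tr2 : B ≤ m+d) (tr3 : m ≤ B+d) (hs : 0 < m+B) :
    d^2 ≤ 2*((m + d^2/(m+B))^2 - m^2) := by
  have hsne : (m+B) ≠ 0 := hs.ne'
  have hP : 0 ≤ d^2*(4*m*(m+B) + 2*d^2 - (m+B)^2) := by
    have hdd : 0 ≤ d^2 - (m-B)^2 := by nlinarith [mul_nonneg (by linarith : (0:ℝ) ≤ d+B-m) (by linarith : (0:ℝ) ≤ d+m-B)]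
    have h10 : 0 ≤ 4*m*(m+B) + 2*d^2 - (m+B)^2 := by nlinarith [sq_nonneg (m-B)]
    exact mul_nonneg (sq_nonneg d) h10
  rw [← sub_nonneg]
  have expand : 2*((m + d^2/(m+B))^2 - m^2) - d^2
      = (d^2*(4*m*(m+B) + 2*d^2 - (m+B)^2))/(m+B)^2 := by
    field_simp
    ring
  rw [expand]
  exact div_nonneg hP (by positivity)

/-- **Arithmetic lemma.** For `μ, b ∈ ℂ` with `(μ, b) ≠ (0, 0)` and
`a = |μ| + |μ - b|²/(|μ| + |b|)`, every unimodular `w` satisfies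
`(a - |b|)² ≤ 4 (Im²(w(μ - b)) + Re²(w μ))` and `|μ - b|² ≤ 2 (a² - |μ|²)`. -/
theorem arithmetic_lemma (μ b : ℂ) (hμb : ¬(μ = 0 ∧ b = 0))
    (w : ℂ) (hw : ‖w‖ = 1) :
    (‖μ‖ + (‖μ - b‖) ^ 2 / (‖μ‖ + ‖b‖)
        - ‖b‖) ^ 2
      ≤ 4 * (((w * (μ - b)).im) ^ 2 + ((w * μ).re) ^ 2) ∧
    (‖μ - b‖) ^ 2
      ≤ 2 * ((‖μ‖
            + (‖μ - b‖) ^ 2 / (‖μ‖ + ‖b‖)) ^ 2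
          - (‖μ‖) ^ 2) := by
  have hm : 0 ≤ ‖μ‖ := norm_nonneg μ
  have hB : 0 ≤ ‖b‖ := norm_nonneg b
  have hd : 0 ≤ ‖μ - b‖ := norm_nonneg _
  have hs : 0 < ‖μ‖ + ‖b‖ := by
    rcases not_and_or.mp hμb with h | h
    · have := norm_pos_iff.mpr h; linarith
    · have := norm_pos_iff.mpr h; linarith
  have tr1 : ‖μ - b‖ ≤ ‖μ‖ + ‖b‖ := by
    simpa using norm_sub_le μ b
  have tr2 : ‖b‖ ≤ ‖μ‖ + ‖μ - b‖ := by
    have := norm_sub_le μ (μ - b)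
    simpa using this
  have tr3 : ‖μ‖ ≤ ‖b‖ + ‖μ - b‖ := by
    have := norm_add_le (μ - b) b
    simp only [sub_add_cancel] at this
    simpa [add_comm] using this
  have sqabs : ∀ z : ℂ, z.re^2 + z.im^2 = (‖z‖)^2 := by
    intro z
    rw [Complex.sq_norm, Complex.normSq_apply]; ring
  have habs : ∀ z : ℂ, ‖w * z‖ = ‖z‖ := by
    intro z; rw [norm_mul, hw, one_mul]
  have h1 : (w*μ).re^2 + (w*μ).im^2 = (‖μ‖)^2 := by
    rw [sqabs, habs]
  have h2 : (w*(μ-b)).re^2 + (w*(μ-b)).im^2 = (‖μ-b‖)^2 := by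
    rw [sqabs, habs]
  have h3 : ((w*μ).re - (w*(μ-b)).re)^2 + ((w*μ).im - (w*(μ-b)).im)^2
      = (‖b‖)^2 := by
    have e : w*μ - w*(μ-b) = w*b := by ring
    rw [← Complex.sub_re, ← Complex.sub_im, e, sqabs, habs]
  constructor
  · exact part1 (‖μ‖) (‖b‖) (‖μ-b‖)
      (w*μ).re (w*μ).im (w*(μ-b)).re (w*(μ-b)).im
      hm hB hd h1 h2 h3 tr1 tr2 tr3 hs
  · exact part2 (‖μ‖) (‖b‖) (‖μ-b‖)
      hm hB hd tr2 tr3 hs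
end
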